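/- For all 1 ≤ a, b, a', b' ≤ d, all 1 ≤ i, j ≤ ℓ', and all integers k, l ≥ 0, the commutator in End_ℂ(P) satisfies ⁅S_i(a,b;k), S_j(a',b';l)⁆ = δ_{i,j}·( δ_{a',b}·S_i(a,b';k+l) − δ_{a,b'}·S_i(a',b;k+l) ). (This is the bosonic x-variable part of Proposition 4.1 of the paper: the operators S_i(a,b;k) realize on the Fock space the commutation relations of the direct sum of Takiff algebras ⊕_{i=1}^{ℓ'} gl_d[t]/t^{γ_i} gl_d[t].) -/

import Mathlib

open MvPolynomial

/-- Multiplication by the variable `v`, as a `ℂ`-linear endomorphism of the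
polynomial ring. -/
noncomputable def mulOp {σ : Type*} (v : σ) :
    Module.End ℂ (MvPolynomial σ ℂ) :=
  LinearMap.mulLeft ℂ (X v)

/-- The partial derivative with respect to the variable `v`, as a `ℂ`-linear endomorphism
of the polynomial ring. -/
noncomputable def derOp {σ : Type*} (v : σ) :
    Module.End ℂ (MvPolynomial σ ℂ) :=
  (pderiv v).toLinearMap

/-- The operator `S_i(a, b; k) = Σ_{r = l+1}^{l+γ-k} ∂_{x^b_r} ∘ x^a_{r+k}` on the bosonic
Fock space `MvPolynomial (Fin d × Fin m) ℂ`, where `l = l_i` and `γ = γ_i` (indices of the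
`x`-variables are written 0-based, so `r` runs over `l, l+1, …, l+γ-k-1`). -/
noncomputable def Takiff_S (d m : ℕ) (l γ : ℕ) (a b : Fin d) (k : ℕ) :
    Module.End ℂ (MvPolynomial (Fin d × Fin m) ℂ) :=
  ∑ r ∈ Finset.range (γ - k),
      if h : l + r + k < m then
        derOp (b, (⟨l + r, by omega⟩ : Fin m)) * mulOp (a, (⟨l + r + k, h⟩ : Fin m))
      else 0

section ops
variable {σ : Type*} [DecidableEq σ]

omit [DecidableEq σ] in
lemma pderiv_comm' (u w : σ) (p : MvPolynomial σ ℂ) :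
    pderiv u (pderiv w p) = pderiv w (pderiv u p) := by
  classical
  induction p using MvPolynomial.induction_on' with
  | add p q hp hq => simp [hp, hq]
  | monomial s c =>
    rcases eq_or_ne u w with rfl | huw
    · rfl
    · simp only [pderiv_monomial]
      rw [tsub_right_comm]
      congr 1
      rw [Finsupp.tsub_apply, Finsupp.tsub_apply, Finsupp.single_eq_of_ne huw,
        Finsupp.single_eq_of_ne (Ne.symm huw)]
      simp only [Nat.sub_zero]
      ring

lemma derOp_mulOp (u v : σ) :
    derOp u * mulOp v = mulOp v * derOp u + if u = v then 1 else 0 := by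
  refine LinearMap.ext fun p => ?_
  simp only [Module.End.mul_apply, LinearMap.add_apply]
  rcases eq_or_ne u v with rfl | huv
  · simp [derOp, mulOp, pderiv_mul, add_comm]
  · simp [derOp, mulOp, pderiv_mul, pderiv_X_of_ne (Ne.symm huv), huv]

omit [DecidableEq σ] in
lemma mulOp_comm (v x : σ) : mulOp v * mulOp x = mulOp x * mulOp v := by
  refine LinearMap.ext fun p => ?_
  show X v * (X x * p) = X x * (X v * p)
  ring

omit [DecidableEq σ] in
lemma derOp_comm (u w : σ) : derOp u * derOp w = derOp w * derOp u :=
  LinearMap.ext fun p => pderiv_comm' u w p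

lemma key_prod (p q r s : σ) :
    (derOp p * mulOp q) * (derOp r * mulOp s)
      = derOp p * derOp r * (mulOp q * mulOp s)
        - (if r = q then (1 : Module.End ℂ (MvPolynomial σ ℂ)) else 0)
            * (derOp p * mulOp s) := by
  have h : mulOp q * derOp r
      = derOp r * mulOp q - (if r = q then (1 : Module.End ℂ (MvPolynomial σ ℂ)) else 0) := by
    rw [derOp_mulOp, add_sub_cancel_right]
  calc (derOp p * mulOp q) * (derOp r * mulOp s)
      = derOp p * (mulOp q * derOp r) * mulOp s := by noncomm_ring
    _ = derOp p * (derOp r * mulOp q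
          - (if r = q then (1 : Module.End ℂ (MvPolynomial σ ℂ)) else 0)) * mulOp s := by rw [h]
    _ = _ := by
        rcases eq_or_ne r q with rfl | hrq <;> simp [mul_sub, sub_mul, mul_assoc]

lemma bracket (u v w x : σ) :
    (derOp u * mulOp v) * (derOp w * mulOp x) - (derOp w * mulOp x) * (derOp u * mulOp v)
      = (if u = x then derOp w * mulOp v else 0)
        - (if w = v then derOp u * mulOp x else 0) := by
  rw [key_prod u v w x, key_prod w x u v, derOp_comm w u, mulOp_comm x v]
  rcases eq_or_ne u x with rfl | hux <;> rcases eq_or_ne w v with rfl | hwv <;>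
    simp <;> abel

end ops

/-- totalized single term operator -/
noncomputable def Tk (d m : ℕ) (hm : 0 < m) (a b : Fin d) (u v : ℕ) :
    Module.End ℂ (MvPolynomial (Fin d × Fin m) ℂ) :=
  derOp (b, (⟨u % m, Nat.mod_lt _ hm⟩ : Fin m)) * mulOp (a, (⟨v % m, Nat.mod_lt _ hm⟩ : Fin m))

lemma Tk_bracket (d m : ℕ) (hm : 0 < m) (a b a' b' : Fin d) (u v u' v' : ℕ) :
    Tk d m hm a b u v * Tk d m hm a' b' u' v' - Tk d m hm a' b' u' v' * Tk d m hm a b u v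
      = (if b = a' ∧ u % m = v' % m then Tk d m hm a b' u' v else 0)
        - (if b' = a ∧ u' % m = v % m then Tk d m hm a' b u v' else 0) := by
  unfold Tk
  rw [bracket]
  congr 1 <;> [skip; skip] <;>
  · refine if_congr ?_ rfl rfl
    simp [Prod.ext_iff, Fin.ext_iff]

lemma S_eq_sum_Tk (d m : ℕ) (hm : 0 < m) (L G : ℕ) (hle : L + G ≤ m) (a b : Fin d) (k : ℕ) :
    Takiff_S d m L G a b k = ∑ r ∈ Finset.range (G - k), Tk d m hm a b (L + r) (L + r + k) := by
  unfold Takiff_S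
  refine Finset.sum_congr rfl fun r hr => ?_
  rw [Finset.mem_range] at hr
  have h1 : L + r + k < m := by omega
  have h2 : L + r < m := by omega
  rw [dif_pos h1]
  simp [Tk, Nat.mod_eq_of_lt h1, Nat.mod_eq_of_lt h2]


open MvPolynomial

lemma takiff_expand (d m : ℕ) (hm : 0 < m) (L1 G1 L2 G2 : ℕ)
    (h1 : L1 + G1 ≤ m) (h2 : L2 + G2 ≤ m) (a b a' b' : Fin d) (k n : ℕ) :
    Takiff_S d m L1 G1 a b k * Takiff_S d m L2 G2 a' b' n
      - Takiff_S d m L2 G2 a' b' n * Takiff_S d m L1 G1 a b k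
    = ∑ r ∈ Finset.range (G1 - k), ∑ s ∈ Finset.range (G2 - n),
        ((if b = a' ∧ (L1 + r) % m = (L2 + s + n) % m
            then Tk d m hm a b' (L2 + s) (L1 + r + k) else 0)
          - (if b' = a ∧ (L2 + s) % m = (L1 + r + k) % m
              then Tk d m hm a' b (L1 + r) (L2 + s + n) else 0)) := by
  rw [S_eq_sum_Tk d m hm L1 G1 h1 a b k, S_eq_sum_Tk d m hm L2 G2 h2 a' b' n,
    Finset.sum_mul_sum, Finset.sum_mul_sum, Finset.sum_comm (s := Finset.range (G2 - n))]
  rw [← Finset.sum_sub_distrib]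
  refine Finset.sum_congr rfl fun r _ => ?_
  rw [← Finset.sum_sub_distrib]
  refine Finset.sum_congr rfl fun s _ => ?_
  exact Tk_bracket d m hm a b a' b' (L1 + r) (L1 + r + k) (L2 + s) (L2 + s + n)

lemma takiff_cross (d m : ℕ) (hm : 0 < m) (L1 G1 L2 G2 : ℕ)
    (h1 : L1 + G1 ≤ m) (h2 : L2 + G2 ≤ m)
    (hsep : ∀ p q, p < G1 → q < G2 → L1 + p ≠ L2 + q) (a b a' b' : Fin d) (k n : ℕ) :
    Takiff_S d m L1 G1 a b k * Takiff_S d m L2 G2 a' b' n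
      - Takiff_S d m L2 G2 a' b' n * Takiff_S d m L1 G1 a b k = 0 := by
  rw [takiff_expand d m hm L1 G1 L2 G2 h1 h2 a b a' b' k n]
  refine Finset.sum_eq_zero fun r hr => Finset.sum_eq_zero fun s hs => ?_
  rw [Finset.mem_range] at hr hs
  have e1 : (L1 + r) % m = L1 + r := Nat.mod_eq_of_lt (by omega)
  have e2 : (L2 + s + n) % m = L2 + (s + n) := by rw [Nat.mod_eq_of_lt (by omega)]; omega
  have e3 : (L2 + s) % m = L2 + s := Nat.mod_eq_of_lt (by omega)
  have e4 : (L1 + r + k) % m = L1 + (r + k) := by rw [Nat.mod_eq_of_lt (by omega)]; omega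
  rw [if_neg, if_neg, sub_zero]
  · rintro ⟨-, h⟩
    rw [e3, e4] at h
    exact hsep (r + k) s (by omega) (by omega) h.symm
  · rintro ⟨-, h⟩
    rw [e1, e2] at h
    exact hsep r (s + n) (by omega) (by omega) h

lemma takiff_diag (d m : ℕ) (hm : 0 < m) (L G : ℕ) (hle : L + G ≤ m)
    (a b a' b' : Fin d) (k n : ℕ) :
    Takiff_S d m L G a b k * Takiff_S d m L G a' b' n
      - Takiff_S d m L G a' b' n * Takiff_S d m L G a b k
    = (if a' = b then Takiff_S d m L G a b' (k + n) else 0)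
        - (if a = b' then Takiff_S d m L G a' b (k + n) else 0) := by
  rw [takiff_expand d m hm L G L G hle hle a b a' b' k n]
  have clean : ∀ r ∈ Finset.range (G - k), ∀ s ∈ Finset.range (G - n),
      ((if b = a' ∧ (L + r) % m = (L + s + n) % m
          then Tk d m hm a b' (L + s) (L + r + k) else 0)
        - (if b' = a ∧ (L + s) % m = (L + r + k) % m
            then Tk d m hm a' b (L + r) (L + s + n) else 0))
      = ((if a' = b then (if r = s + n then Tk d m hm a b' (L + s) (L + r + k) else 0) else 0)
        - (if a = b' then (if s = r + k then Tk d m hm a' b (L + r) (L + s + n) else 0) else 0)) := by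
    intro r hr s hs
    rw [Finset.mem_range] at hr hs
    have e1 : (L + r) % m = L + r := Nat.mod_eq_of_lt (by omega)
    have e2 : (L + s + n) % m = L + s + n := Nat.mod_eq_of_lt (by omega)
    have e3 : (L + s) % m = L + s := Nat.mod_eq_of_lt (by omega)
    have e4 : (L + r + k) % m = L + r + k := Nat.mod_eq_of_lt (by omega)
    rw [e1, e2, e3, e4]
    congr 1
    · rw [if_congr (show (b = a' ∧ L + r = L + s + n) ↔ (a' = b ∧ r = s + n) by
        constructor <;> rintro ⟨x, y⟩ <;> exact ⟨x.symm, by omega⟩) rfl rfl, ite_and]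
    · rw [if_congr (show (b' = a ∧ L + s = L + r + k) ↔ (a = b' ∧ s = r + k) by
        constructor <;> rintro ⟨x, y⟩ <;> exact ⟨x.symm, by omega⟩) rfl rfl, ite_and]
  rw [Finset.sum_congr rfl (fun r hr => Finset.sum_congr rfl (fun s hs => clean r hr s hs))]
  have split : ∀ f g : ℕ → ℕ → Module.End ℂ (MvPolynomial (Fin d × Fin m) ℂ),
      ∑ r ∈ Finset.range (G - k), ∑ s ∈ Finset.range (G - n), (f r s - g r s)
        = (∑ r ∈ Finset.range (G - k), ∑ s ∈ Finset.range (G - n), f r s)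
          - (∑ r ∈ Finset.range (G - k), ∑ s ∈ Finset.range (G - n), g r s) := by
    intro f g
    rw [← Finset.sum_sub_distrib]
    exact Finset.sum_congr rfl fun r _ => by rw [← Finset.sum_sub_distrib]
  rw [split]
  congr 1
  · by_cases ha : a' = b
    · simp only [if_pos ha]
      rw [Finset.sum_comm]
      have step : ∀ s ∈ Finset.range (G - n),
          (∑ r ∈ Finset.range (G - k),
            if r = s + n then Tk d m hm a b' (L + s) (L + r + k) else 0)
          = if s + n ∈ Finset.range (G - k) then Tk d m hm a b' (L + s) (L + (s + n) + k)
            else 0 := fun s _ => Finset.sum_ite_eq' (Finset.range (G - k)) (s + n)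
              (fun r => Tk d m hm a b' (L + s) (L + r + k))
      rw [Finset.sum_congr rfl step, S_eq_sum_Tk d m hm L G hle a b' (k + n)]
      rw [← Finset.sum_subset (Finset.range_subset_range.2 (show G - (k + n) ≤ G - n by omega))
        (fun x hx hnx => by
          rw [Finset.mem_range] at hx hnx
          exact if_neg fun hmem => absurd (Finset.mem_range.1 hmem) (by omega))]
      refine Finset.sum_congr rfl fun s hs => ?_
      rw [Finset.mem_range] at hs
      rw [if_pos (Finset.mem_range.2 (by omega))]
      congr 1
      omega
    · simp [ha]
  · by_cases ha : a = b'
    · simp only [if_pos ha]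
      have step : ∀ r ∈ Finset.range (G - k),
          (∑ s ∈ Finset.range (G - n),
            if s = r + k then Tk d m hm a' b (L + r) (L + s + n) else 0)
          = if r + k ∈ Finset.range (G - n) then Tk d m hm a' b (L + r) (L + (r + k) + n)
            else 0 := fun r _ => Finset.sum_ite_eq' (Finset.range (G - n)) (r + k)
              (fun s => Tk d m hm a' b (L + r) (L + s + n))
      rw [Finset.sum_congr rfl step, S_eq_sum_Tk d m hm L G hle a' b (k + n)]
      rw [← Finset.sum_subset (Finset.range_subset_range.2 (show G - (k + n) ≤ G - k by omega))
        (fun x hx hnx => by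
          rw [Finset.mem_range] at hx hnx
          exact if_neg fun hmem => absurd (Finset.mem_range.1 hmem) (by omega))]
      refine Finset.sum_congr rfl fun r hr => ?_
      rw [Finset.mem_range] at hr
      rw [if_pos (Finset.mem_range.2 (by omega))]
      congr 1
      omega
    · simp [ha]

/-- The operators `S_i(a,b;k)` satisfy the commutation relations of the
direct sum of Takiff algebras `⊕_{i=1}^{ℓ'} gl_d[t]/t^{γ_i} gl_d[t]`:
`⁅S_i(a,b;k), S_j(a',b';l)⁆ = δ_{ij} (δ_{a'b} S_i(a,b';k+l) - δ_{ab'} S_i(a',b;k+l))`. -/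
theorem stmt7 (d ℓ' : ℕ) (hd : 1 ≤ d) (hℓ : 1 ≤ ℓ')
    (γ : Fin ℓ' → ℕ) (hγ : ∀ i, 0 < γ i) (m : ℕ) (hm : m = ∑ i, γ i)
    (l : Fin ℓ' → ℕ)
    (hl : ∀ i, l i = ∑ j ∈ Finset.univ.filter (fun j => j < i), γ j)
    (i j : Fin ℓ') (a b a' b' : Fin d) (k n : ℕ) :
    Takiff_S d m (l i) (γ i) a b k * Takiff_S d m (l j) (γ j) a' b' n
      - Takiff_S d m (l j) (γ j) a' b' n * Takiff_S d m (l i) (γ i) a b k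
    = if i = j then
        (if a' = b then Takiff_S d m (l i) (γ i) a b' (k + n) else 0)
          - (if a = b' then Takiff_S d m (l i) (γ i) a' b (k + n) else 0)
      else 0 := by
  have key : ∀ t : Fin ℓ', l t + γ t = ∑ x ∈ insert t (Finset.univ.filter (fun x => x < t)), γ x := by
    intro t
    rw [Finset.sum_insert (by simp), hl, add_comm]
  have hub : ∀ t, l t + γ t ≤ m := by
    intro t
    rw [key, hm]
    exact Finset.sum_le_sum_of_subset (Finset.subset_univ _)
  have hm0 : 0 < m := lt_of_lt_of_le (hγ i) (le_trans (Nat.le_add_left _ _) (hub i))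
  have hmono : ∀ t u : Fin ℓ', t < u → l t + γ t ≤ l u := by
    intro t u htu
    rw [key, hl u]
    refine Finset.sum_le_sum_of_subset ?_
    intro x hx
    simp only [Finset.mem_insert, Finset.mem_filter, Finset.mem_univ, true_and] at hx ⊢
    rcases hx with rfl | h
    · exact htu
    · exact lt_trans h htu
  rcases eq_or_ne i j with rfl | hij
  · rw [if_pos rfl]
    exact takiff_diag d m hm0 (l i) (γ i) (hub i) a b a' b' k n
  · rw [if_neg hij]
    refine takiff_cross d m hm0 _ _ _ _ (hub i) (hub j) ?_ a b a' b' k n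
    intro p q hp hq
    rcases lt_or_gt_of_ne hij with h | h
    · have := hmono i j h
      omega
    · have := hmono j i h
      omega
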